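/- The 5-dimensional nilpotent commutative associative algebra A₀₅ does not degenerate to A₁₅: the structure λ of A₁₅ does NOT lie in the closure of the GL(5,ℂ)-orbit O(μ) of the structure μ of A₀₅ (closure in the standard topology on the space of bilinear maps ℂ⁵ × ℂ⁵ → ℂ⁵). -/

import Mathlib

set_option maxRecDepth 8000


open ContinuousLinearMap

/-- The underlying space `ℂⁿ`. -/
abbrev Vn (n : ℕ) := Fin n → ℂ

/-- The space of bilinear maps `ℂⁿ × ℂⁿ → ℂⁿ` (as continuous linear maps in two
arguments), carrying its standard topology as a finite-dimensional complex vector space. -/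
abbrev Bil (n : ℕ) := Vn n →L[ℂ] Vn n →L[ℂ] Vn n

/-- The action of `GL(n, ℂ)` on bilinear maps: `(g · μ)(x, y) = g (μ (g⁻¹ x) (g⁻¹ y))`. -/
noncomputable def act {n : ℕ} (g : Vn n ≃L[ℂ] Vn n) (μ : Bil n) : Bil n :=
  ((compL ℂ (Vn n) (Vn n) (Vn n)).flip (g.symm : Vn n →L[ℂ] Vn n)).comp
    (((compL ℂ (Vn n) (Vn n) (Vn n)) (g : Vn n →L[ℂ] Vn n)).comp
      (μ.comp (g.symm : Vn n →L[ℂ] Vn n)))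

@[simp] lemma act_apply {n : ℕ} (g : Vn n ≃L[ℂ] Vn n) (μ : Bil n) (x y : Vn n) :
    act g μ x y = g (μ (g.symm x) (g.symm y)) := rfl

/-- The orbit `O(μ)` of a bilinear map under the `GL(n, ℂ)`-action. -/
noncomputable def orbit {n : ℕ} (μ : Bil n) : Set (Bil n) :=
  {ν | ∃ g : Vn n ≃L[ℂ] Vn n, ν = act g μ}

/-- The standard basis `e₁, …, e₅` of `ℂ⁵` (zero-indexed: `e i` is `e_{i+1}`). -/
def e (i : Fin 5) : Vn 5 := Pi.single i 1

/-- Multiplication table of the algebra `𝐀05` (entry `(i, j)` is `eᵢ · eⱼ`). -/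
def tblA05 : Fin 5 → Fin 5 → Vn 5 :=
  ![![e 1, e 2, e 3, 0, 0],
   ![e 2, e 3, 0, 0, 0],
   ![e 3, 0, 0, 0, 0],
   ![0, 0, 0, 0, 0],
   ![0, 0, 0, 0, 0]]

/-- Multiplication table of the algebra `𝐀15` (entry `(i, j)` is `eᵢ · eⱼ`). -/
def tblA15 : Fin 5 → Fin 5 → Vn 5 :=
  ![![0, e 2, 0, 0, 0],
   ![e 2, 0, 0, 0, 0],
   ![0, 0, 0, 0, 0],
   ![0, 0, 0, e 4, 0],
   ![0, 0, 0, 0, 0]]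

/-! ### Auxiliary development for the non-degeneration proof

The obstruction: for any bilinear map `ν`, functionals `u,v,w` (represented as
vectors, acting via the bilinear pairing `dotc`) and vectors `x₁,x₂,x₃,y₁,y₂,y₃`,
consider the 3×3 determinant `Dd` with entries `⟨u_i, ν x_i y_j⟩`, and its
symmetrization `Tt` over the functionals.  For `μ = 𝐀05` one has the identity
`Tt = -6 u₃v₃w₃ · det(x-coords 0,1,2) · det(y-coords 0,1,2)` — in particular the
dependence on the functionals is a perfect cube.  This cube structure is preserved
by the `GL₅` action, and forces `Ψ(ν) := Tt(a,a,a)Tt(b,b,a) - Tt(a,b,a)²` to vanish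
on the whole orbit, hence on its closure.  For `𝐀15` the corresponding cubic is
`-f₂²f₄` (not a cube), and `Ψ(λ) = -4 ≠ 0`. -/

noncomputable section A05aux

/-- The standard bilinear pairing on `ℂ⁵`. -/
def dotc (u z : Vn 5) : ℂ := ∑ i, u i * z i

lemma dotc_e (u : Vn 5) (k : Fin 5) : dotc u (e k) = u k := by
  simp [dotc, e, Pi.single_apply, mul_ite, Finset.sum_ite_eq']

lemma dotc_zero (u : Vn 5) : dotc u 0 = 0 := by simp [dotc]

lemma dotc_add (u z w : Vn 5) : dotc u (z + w) = dotc u z + dotc u w := by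
  simp [dotc, mul_add, Finset.sum_add_distrib]

lemma dotc_smul (u : Vn 5) (c : ℂ) (z : Vn 5) : dotc u (c • z) = c * dotc u z := by
  unfold dotc
  rw [Finset.mul_sum]
  refine Finset.sum_congr rfl fun i _ => ?_
  simp [mul_comm, mul_left_comm]

lemma vec_decomp (z : Vn 5) :
    z = z 0 • e 0 + z 1 • e 1 + z 2 • e 2 + z 3 • e 3 + z 4 • e 4 := by
  funext i
  fin_cases i <;> simp [e, Pi.single_apply]

/-- The determinant of the 0,1,2-coordinates of three vectors. -/
def det3x (x1 x2 x3 : Vn 5) : ℂ :=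
  x1 0 * (x2 1 * x3 2 - x2 2 * x3 1)
  - x1 1 * (x2 0 * x3 2 - x2 2 * x3 0)
  + x1 2 * (x2 0 * x3 1 - x2 1 * x3 0)

/-- 3×3 determinant with entries `⟨f_i, ν x_i y_j⟩` where the rows carry the
functionals `u, v, w`. -/
def Dd (ν : Bil 5) (u v w x1 x2 x3 y1 y2 y3 : Vn 5) : ℂ :=
  dotc u (ν x1 y1) * (dotc v (ν x2 y2) * dotc w (ν x3 y3) - dotc v (ν x2 y3) * dotc w (ν x3 y2))
  - dotc u (ν x1 y2) * (dotc v (ν x2 y1) * dotc w (ν x3 y3) - dotc v (ν x2 y3) * dotc w (ν x3 y1))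
  + dotc u (ν x1 y3) * (dotc v (ν x2 y1) * dotc w (ν x3 y2) - dotc v (ν x2 y2) * dotc w (ν x3 y1))

/-- Symmetrization of `Dd` over the three functionals. -/
def Tt (ν : Bil 5) (u v w x1 x2 x3 y1 y2 y3 : Vn 5) : ℂ :=
  Dd ν u v w x1 x2 x3 y1 y2 y3 + Dd ν u w v x1 x2 x3 y1 y2 y3
  + Dd ν v u w x1 x2 x3 y1 y2 y3 + Dd ν v w u x1 x2 x3 y1 y2 y3
  + Dd ν w u v x1 x2 x3 y1 y2 y3 + Dd ν w v u x1 x2 x3 y1 y2 y3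

/-- The scalar obstruction function. -/
def Psi (ν : Bil 5) : ℂ :=
  Tt ν (e 2) (e 2) (e 2) (e 0) (e 1) (e 3) (e 0) (e 1) (e 3)
    * Tt ν (e 4) (e 4) (e 2) (e 0) (e 1) (e 3) (e 0) (e 1) (e 3)
  - Tt ν (e 2) (e 4) (e 2) (e 0) (e 1) (e 3) (e 0) (e 1) (e 3)
    * Tt ν (e 2) (e 4) (e 2) (e 0) (e 1) (e 3) (e 0) (e 1) (e 3)

lemma mu_coord (μ : Bil 5) (hμ : ∀ i j : Fin 5, μ (e i) (e j) = tblA05 i j)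
    (u x y : Vn 5) :
    dotc u (μ x y) = u 1 * (x 0 * y 0) + u 2 * (x 0 * y 1 + x 1 * y 0)
      + u 3 * (x 0 * y 2 + x 2 * y 0 + x 1 * y 1) := by
  conv_lhs => rw [vec_decomp x, vec_decomp y]
  simp only [map_add, map_smul, ContinuousLinearMap.add_apply, ContinuousLinearMap.smul_apply,
    hμ, dotc_add, dotc_smul,
    show tblA05 0 0 = e 1 from rfl, show tblA05 0 1 = e 2 from rfl,
    show tblA05 0 2 = e 3 from rfl, show tblA05 0 3 = 0 from rfl,
    show tblA05 0 4 = 0 from rfl,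
    show tblA05 1 0 = e 2 from rfl, show tblA05 1 1 = e 3 from rfl,
    show tblA05 1 2 = 0 from rfl, show tblA05 1 3 = 0 from rfl,
    show tblA05 1 4 = 0 from rfl,
    show tblA05 2 0 = e 3 from rfl, show tblA05 2 1 = 0 from rfl,
    show tblA05 2 2 = 0 from rfl, show tblA05 2 3 = 0 from rfl,
    show tblA05 2 4 = 0 from rfl,
    show tblA05 3 0 = 0 from rfl, show tblA05 3 1 = 0 from rfl,
    show tblA05 3 2 = 0 from rfl, show tblA05 3 3 = 0 from rfl,
    show tblA05 3 4 = 0 from rfl,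
    show tblA05 4 0 = 0 from rfl, show tblA05 4 1 = 0 from rfl,
    show tblA05 4 2 = 0 from rfl, show tblA05 4 3 = 0 from rfl,
    show tblA05 4 4 = 0 from rfl,
    dotc_e, dotc_zero]
  ring

/-- The key identity on `𝐀05`: full factorization with a cubic dependence on the
functionals. -/
lemma Tt_mu (μ : Bil 5) (hμ : ∀ i j : Fin 5, μ (e i) (e j) = tblA05 i j)
    (u v w x1 x2 x3 y1 y2 y3 : Vn 5) :
    Tt μ u v w x1 x2 x3 y1 y2 y3
      = -6 * (u 3 * v 3 * w 3) * det3x x1 x2 x3 * det3x y1 y2 y3 := by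
  simp only [Tt, Dd, mu_coord μ hμ, det3x]
  ring

/-- Pullback of a functional along `g`. -/
def pull (g : Vn 5 ≃L[ℂ] Vn 5) (f : Vn 5) : Vn 5 := fun k => dotc f (g (e k))

lemma dotc_g (g : Vn 5 ≃L[ℂ] Vn 5) (f z : Vn 5) :
    dotc f (g z) = dotc (pull g f) z := by
  show _ = dotc (fun k => dotc f (g (e k))) z
  conv_lhs => rw [vec_decomp z]
  simp only [map_add, map_smul, dotc_add, dotc_smul]
  have : ∀ u : Vn 5, dotc u z = u 0 * z 0 + u 1 * z 1 + u 2 * z 2 + u 3 * z 3 + u 4 * z 4 := by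
    intro u; simp [dotc, Fin.sum_univ_five]
  rw [this]
  ring

lemma Tt_act (g : Vn 5 ≃L[ℂ] Vn 5) (μ : Bil 5) (u v w x1 x2 x3 y1 y2 y3 : Vn 5) :
    Tt (act g μ) u v w x1 x2 x3 y1 y2 y3
      = Tt μ (pull g u) (pull g v) (pull g w)
          (g.symm x1) (g.symm x2) (g.symm x3) (g.symm y1) (g.symm y2) (g.symm y3) := by
  unfold Tt Dd
  simp only [act_apply, dotc_g g]

lemma Psi_orbit (μ : Bil 5) (hμ : ∀ i j : Fin 5, μ (e i) (e j) = tblA05 i j)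
    (ν : Bil 5) (hν : ν ∈ orbit μ) : Psi ν = 0 := by
  obtain ⟨g, rfl⟩ := hν
  unfold Psi
  rw [Tt_act, Tt_act, Tt_act, Tt_mu μ hμ, Tt_mu μ hμ, Tt_mu μ hμ]
  ring

lemma Psi_lam (lam : Bil 5) (hlam : ∀ i j : Fin 5, lam (e i) (e j) = tblA15 i j) :
    Psi lam = -4 := by
  simp only [Psi, Tt, Dd, hlam,
    show tblA15 0 0 = 0 from rfl, show tblA15 0 1 = e 2 from rfl,
    show tblA15 0 3 = 0 from rfl,
    show tblA15 1 0 = e 2 from rfl, show tblA15 1 1 = 0 from rfl,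
    show tblA15 1 3 = 0 from rfl,
    show tblA15 3 0 = 0 from rfl, show tblA15 3 1 = 0 from rfl,
    show tblA15 3 3 = e 4 from rfl,
    dotc_e, dotc_zero]
  simp [e, Pi.single_apply]
  norm_num

set_option synthInstance.maxHeartbeats 400000 in
lemma Psi_continuous : Continuous Psi := by
  have key : ∀ f p q : Vn 5, Continuous fun ν : Bil 5 => dotc f (ν p q) := by
    intro f p q
    have h1 : Continuous fun ν : Bil 5 => ν p q := by
      have := (ContinuousLinearMap.apply ℂ (Vn 5) q).continuous.comp
        (ContinuousLinearMap.apply ℂ (Vn 5 →L[ℂ] Vn 5) p).continuous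
      exact this
    unfold dotc
    exact continuous_finset_sum _ fun i _ =>
      continuous_const.mul ((continuous_apply i).comp h1)
  unfold Psi Tt Dd
  fun_prop

end A05aux

/-- The $5$-dimensional nilpotent commutative associative algebra `𝐀05` does not degenerate to
`𝐀15`: the structure `λ` of `𝐀15` does NOT lie in the closure of
the `GL(5, ℂ)`-orbit `O(μ)` of the structure `μ` of `𝐀05`. -/
theorem A05_not_deg_A15 (μ lam : Bil 5)
    (hμ : ∀ i j : Fin 5, μ (e i) (e j) = tblA05 i j)
    (hlam : ∀ i j : Fin 5, lam (e i) (e j) = tblA15 i j) :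
    lam ∉ closure (orbit μ) := by
  intro hcl
  have hsub : closure (orbit μ) ⊆ {ν : Bil 5 | Psi ν = 0} :=
    closure_minimal (fun ν hν => Psi_orbit μ hμ ν hν)
      (isClosed_eq Psi_continuous continuous_const)
  have h0 : Psi lam = 0 := hsub hcl
  rw [Psi_lam lam hlam] at h0
  norm_num at h0
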